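/- Let Z be a measurable space, D a probability measure on Z, m ≥ 1, and 𝒢 a nonempty countable class of measurable functions Z → ℝ that is uniformly bounded. Let λ ≥ 0 and let g₀ : Z → ℝ satisfy g₀ = (1+λ)·g₁ − λ·g₂ pointwise, where g₁ and g₂ are finite convex combinations of functions in 𝒢. Then R_D(𝒢) ≤ R_D(𝒢 ∪ {g₀}) ≤ (1+λ)·R_D(𝒢). (Expected-complexity form of Theorem 1.) -/

import Mathlib

open Finset MeasureTheory

/-- The empirical Rademacher complexity of a set `A ⊆ ℝ^m`. -/
noncomputable def radComp (m : ℕ) (A : Set (Fin m → ℝ)) : ℝ :=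
  ((2 : ℝ) ^ m)⁻¹ * ∑ ε : Fin m → Bool,
    sSup ((fun v => (1 / (m : ℝ)) * ∑ i, (if ε i then (1 : ℝ) else -1) * v i) '' A)

/-- Empirical Rademacher complexity of a function class `G` on the sample `S`. -/
noncomputable def empRad {Z : Type*} (m : ℕ) (S : Fin m → Z) (G : Set (Z → ℝ)) : ℝ :=
  radComp m ((fun g => fun i => g (S i)) '' G)

/-- Expected Rademacher complexity `R_D(G) = E_{S ∼ D^m}[R̂_S(G)]`. -/
noncomputable def expRad {Z : Type*} [MeasurableSpace Z] (m : ℕ) (D : Measure Z)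
    (G : Set (Z → ℝ)) : ℝ :=
  ∫ S, empRad m S G ∂(Measure.pi fun _ : Fin m => D)
noncomputable def phi {Z : Type*} (m : ℕ) (ε : Fin m → Bool) (S : Fin m → Z) (g : Z → ℝ) : ℝ :=
  (1 / (m : ℝ)) * ∑ i, (if ε i then (1:ℝ) else -1) * g (S i)

lemma empRad_eq {Z : Type*} (m : ℕ) (S : Fin m → Z) (G : Set (Z → ℝ)) :
    empRad m S G = ((2:ℝ)^m)⁻¹ * ∑ ε : Fin m → Bool, sSup (phi m ε S '' G) := by
  simp [empRad, radComp, Set.image_image, phi]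
  refine Finset.sum_congr rfl fun ε _ => ?_
  congr 2; funext g; simp [phi]

lemma phi_linear {Z : Type*} (m : ℕ) (ε : Fin m → Bool) (S : Fin m → Z) :
    IsLinearMap ℝ (phi m ε S) := by
  constructor
  · intro g h
    simp only [phi, Pi.add_apply, mul_add, Finset.sum_add_distrib]
  · intro c g
    simp only [phi, Pi.smul_apply, smul_eq_mul, Finset.mul_sum]
    exact Finset.sum_congr rfl fun i _ => by ring

lemma phi_neg {Z : Type*} (m : ℕ) (ε : Fin m → Bool) (S : Fin m → Z) (g : Z → ℝ) :
    phi m (fun i => !(ε i)) S g = - phi m ε S g := by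
  simp only [phi, ← mul_neg, ← Finset.sum_neg_distrib]
  congr 1
  refine Finset.sum_congr rfl fun i _ => ?_
  have h : (if (!ε i) = true then (1:ℝ) else -1) = -(if ε i = true then 1 else -1) := by
    cases ε i <;> simp
  rw [h]; ring

lemma phi_g₀ {Z : Type*} (m : ℕ) (ε : Fin m → Bool) (S : Fin m → Z)
    (lam : ℝ) (g₀ g₁ g₂ : Z → ℝ) (hg₀ : ∀ z, g₀ z = (1 + lam) * g₁ z - lam * g₂ z) :
    phi m ε S g₀ = (1 + lam) * phi m ε S g₁ - lam * phi m ε S g₂ := by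
  simp only [phi, hg₀, mul_sub, mul_add, Finset.sum_sub_distrib, Finset.mul_sum]
  congr 1 <;> exact Finset.sum_congr rfl fun i _ => by ring

lemma phi_abs_le {Z : Type*} (m : ℕ) (hm : 1 ≤ m) (ε : Fin m → Bool) (S : Fin m → Z)
    (g : Z → ℝ) (B : ℝ) (hB : ∀ z, |g z| ≤ B) : |phi m ε S g| ≤ B := by
  have hm0 : (0:ℝ) < m := by exact_mod_cast hm
  have : |phi m ε S g| ≤ (1 / (m:ℝ)) * ∑ i : Fin m, B := by
    rw [phi, abs_mul, abs_of_pos (by positivity : (0:ℝ) < 1 / (m:ℝ))]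
    gcongr
    refine (Finset.abs_sum_le_sum_abs _ _).trans (Finset.sum_le_sum fun i _ => ?_)
    rw [abs_mul]
    have : |if ε i then (1:ℝ) else -1| = 1 := by cases ε i <;> simp
    rw [this, one_mul]; exact hB _
  calc |phi m ε S g| ≤ (1 / (m:ℝ)) * ∑ i : Fin m, B := this
    _ = B := by rw [Finset.sum_const]; simp; field_simp
lemma phi_convexHull_le {Z : Type*} (m : ℕ) (ε : Fin m → Bool) (S : Fin m → Z)
    {G : Set (Z → ℝ)} {c : ℝ} (h : ∀ g ∈ G, phi m ε S g ≤ c)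
    {g : Z → ℝ} (hg : g ∈ convexHull ℝ G) : phi m ε S g ≤ c :=
  convexHull_min h (convex_halfSpace_le (phi_linear m ε S) c) hg

lemma convexHull_abs_le {Z : Type*} {G : Set (Z → ℝ)} {C : ℝ}
    (hGb : ∀ g ∈ G, ∀ z, |g z| ≤ C) {g : Z → ℝ} (hg : g ∈ convexHull ℝ G)
    (z : Z) : |g z| ≤ C := by
  have hlin : IsLinearMap ℝ (fun f : Z → ℝ => f z) := ⟨fun a b => rfl, fun c a => rfl⟩
  have h1 : g ∈ {f : Z → ℝ | f z ≤ C} :=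
    convexHull_min (fun f hf => (abs_le.1 (hGb f hf z)).2) (convex_halfSpace_le hlin C) hg
  have h2 : g ∈ {f : Z → ℝ | -C ≤ f z} :=
    convexHull_min (fun f hf => (abs_le.1 (hGb f hf z)).1) (convex_halfSpace_ge hlin (-C)) hg
  exact abs_le.2 ⟨h2, h1⟩

lemma convexHull_measurable {Z : Type*} [MeasurableSpace Z] {G : Set (Z → ℝ)}
    (hGm : ∀ g ∈ G, Measurable g) {g : Z → ℝ} (hg : g ∈ convexHull ℝ G) :
    Measurable g := by
  refine convexHull_min hGm ?_ hg
  intro x hx y hy a b _ _ _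
  have hx' : Measurable x := hx
  have hy' : Measurable y := hy
  exact (hx'.const_smul a).add (hy'.const_smul b)
lemma emp_ineq {Z : Type*} (m : ℕ) (hm : 1 ≤ m) (G : Set (Z → ℝ)) (hG : G.Nonempty)
    (C : ℝ) (hGb : ∀ g ∈ G, ∀ z, |g z| ≤ C)
    (lam : ℝ) (hlam : 0 ≤ lam) (g₀ g₁ g₂ : Z → ℝ)
    (hg₁ : g₁ ∈ convexHull ℝ G) (hg₂ : g₂ ∈ convexHull ℝ G)
    (hg₀ : ∀ z, g₀ z = (1 + lam) * g₁ z - lam * g₂ z) (S : Fin m → Z) :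
    empRad m S G ≤ empRad m S (G ∪ {g₀}) ∧
      empRad m S (G ∪ {g₀}) ≤ (1 + lam) * empRad m S G := by
  obtain ⟨gw, hgw⟩ := hG
  have hC0 : 0 ≤ C := le_trans (abs_nonneg _) (hGb gw hgw (S ⟨0, hm⟩))
  set C₀ : ℝ := (1 + 2 * lam) * C with hC₀def
  have hCC₀ : C ≤ C₀ := by nlinarith
  have hg₀b : ∀ z, |g₀ z| ≤ C₀ := by
    intro z
    have h1 := convexHull_abs_le hGb hg₁ z
    have h2 := convexHull_abs_le hGb hg₂ z
    rw [hg₀ z]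
    calc |(1 + lam) * g₁ z - lam * g₂ z| ≤ |(1+lam) * g₁ z| + |lam * g₂ z| := abs_sub _ _
      _ = (1+lam) * |g₁ z| + lam * |g₂ z| := by
          rw [abs_mul, abs_mul, abs_of_nonneg (by linarith : (0:ℝ) ≤ 1+lam),
            abs_of_nonneg hlam]
      _ ≤ (1+lam) * C + lam * C := by
          gcongr <;> linarith
      _ = C₀ := by rw [hC₀def]; ring
  have hGb' : ∀ g ∈ G ∪ {g₀}, ∀ z, |g z| ≤ C₀ := by
    rintro g (hg | rfl) z
    · exact (hGb g hg z).trans hCC₀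
    · exact hg₀b z
  -- basic sup facts
  set s : (Fin m → Bool) → ℝ := fun ε => sSup (phi m ε S '' G) with hsdef
  set t : (Fin m → Bool) → ℝ := fun ε => phi m ε S g₀ with htdef
  have hne : ∀ ε : Fin m → Bool, (phi m ε S '' G).Nonempty := fun ε => ⟨_, ⟨gw, hgw, rfl⟩⟩
  have hbdd : ∀ ε : Fin m → Bool, BddAbove (phi m ε S '' G) := by
    intro ε
    refine ⟨C, ?_⟩
    rintro x ⟨g, hg, rfl⟩
    exact (abs_le.1 (phi_abs_le m hm ε S g C (hGb g hg))).2
  have hbdd' : ∀ ε : Fin m → Bool, BddAbove (phi m ε S '' (G ∪ {g₀})) := by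
    intro ε
    refine ⟨C₀, ?_⟩
    rintro x ⟨g, hg, rfl⟩
    exact (abs_le.1 (phi_abs_le m hm ε S g C₀ (hGb' g hg))).2
  have hphile : ∀ ε : Fin m → Bool, ∀ g ∈ G, phi m ε S g ≤ s ε :=
    fun ε g hg => le_csSup (hbdd ε) ⟨g, hg, rfl⟩
  set ν : (Fin m → Bool) → (Fin m → Bool) := fun ε i => !(ε i) with hνdef
  have hνinv : Function.Involutive ν := by intro ε; funext i; simp [hνdef]
  have hsumν : ∀ f : (Fin m → Bool) → ℝ, ∑ ε : Fin m → Bool, f (ν ε) = ∑ ε, f ε :=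
    fun f => Equiv.sum_comp (hνinv.toPerm ν) f
  have hs_add : ∀ ε : Fin m → Bool, 0 ≤ s ε + s (ν ε) := by
    intro ε
    have h1 := hphile ε gw hgw
    have h2 := hphile (ν ε) gw hgw
    have h3 : phi m (ν ε) S gw = - phi m ε S gw := phi_neg m ε S gw
    linarith [h3 ▸ h2]
  have ht_add : ∀ ε : Fin m → Bool, t ε + t (ν ε) = 0 := by
    intro ε
    have h3 : phi m (ν ε) S g₀ = - phi m ε S g₀ := phi_neg m ε S g₀
    simp [htdef, h3]
  have ht_le : ∀ ε : Fin m → Bool, t ε ≤ (1+lam) * s ε + lam * s (ν ε) := by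
    intro ε
    have h1 : phi m ε S g₁ ≤ s ε := phi_convexHull_le m ε S (hphile ε) hg₁
    have h2 : phi m (ν ε) S g₂ ≤ s (ν ε) := phi_convexHull_le m (ν ε) S (hphile (ν ε)) hg₂
    have h3 : phi m (ν ε) S g₂ = - phi m ε S g₂ := phi_neg m ε S g₂
    have h4 : t ε = (1 + lam) * phi m ε S g₁ - lam * phi m ε S g₂ :=
      phi_g₀ m ε S lam g₀ g₁ g₂ hg₀
    rw [h4]
    have h5 : - phi m ε S g₂ ≤ s (ν ε) := h3 ▸ h2
    nlinarith
  -- sSup over union is max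
  have hsup_union : ∀ ε : Fin m → Bool, sSup (phi m ε S '' (G ∪ {g₀})) = s ε ⊔ t ε := by
    intro ε
    rw [Set.image_union, Set.image_singleton,
      csSup_union (hbdd ε) (hne ε) bddAbove_singleton (Set.singleton_nonempty _),
      csSup_singleton]
  constructor
  · rw [empRad_eq, empRad_eq]
    gcongr with ε _
    · exact hbdd' ε
    · exact hne ε
    · exact Set.subset_union_left
  · rw [empRad_eq, empRad_eq]
    rw [← mul_assoc, mul_comm (1+lam) (((2:ℝ)^m)⁻¹), mul_assoc]
    gcongr ((2:ℝ)^m)⁻¹ * ?_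
    simp only [hsup_union]
    -- key: ∑ max ≤ (1+lam) * ∑ s
    have key : ∀ ε : Fin m → Bool,
        (s ε ⊔ t ε) + (s (ν ε) ⊔ t (ν ε)) ≤ (1+lam) * (s ε + s (ν ε)) := by
      intro ε
      have hb1 := ht_le ε
      have hb2 := ht_le (ν ε)
      rw [hνinv ε] at hb2
      have hc := hs_add ε
      have ha := ht_add ε
      have hnn : 0 ≤ (1+lam) * (s ε + s (ν ε)) := by positivity
      rcases max_cases (s ε) (t ε) with ⟨h1, _⟩ | ⟨h1, _⟩ <;>
        rcases max_cases (s (ν ε)) (t (ν ε)) with ⟨h2, _⟩ | ⟨h2, _⟩ <;>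
        rw [h1, h2] <;> nlinarith
    have e1 : ∑ ε : Fin m → Bool, (s (ν ε) ⊔ t (ν ε)) = ∑ ε : Fin m → Bool, (s ε ⊔ t ε) :=
      hsumν (fun ε => s ε ⊔ t ε)
    have e2 : ∑ ε : Fin m → Bool, s (ν ε) = ∑ ε : Fin m → Bool, s ε := hsumν _
    have e3 : ∑ ε : Fin m → Bool, ((s ε ⊔ t ε) + (s (ν ε) ⊔ t (ν ε)))
        ≤ ∑ ε : Fin m → Bool, (1+lam) * (s ε + s (ν ε)) :=
      Finset.sum_le_sum fun ε _ => key ε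
    rw [Finset.sum_add_distrib, e1] at e3
    have e4 : ∑ ε : Fin m → Bool, (1+lam) * (s ε + s (ν ε))
        = (1+lam) * ((∑ ε : Fin m → Bool, s ε) + ∑ ε : Fin m → Bool, s ε) := by
      rw [← Finset.mul_sum, Finset.sum_add_distrib, e2]
    rw [e4] at e3
    have e5 : (1+lam) * ((∑ ε : Fin m → Bool, s ε) + ∑ ε : Fin m → Bool, s ε)
        = 2 * ((1+lam) * ∑ ε : Fin m → Bool, s ε) := by ring
    linarith
lemma empRad_measurable {Z : Type*} [MeasurableSpace Z] (m : ℕ) (G : Set (Z → ℝ))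
    (hG : G.Nonempty) (hGc : G.Countable) (hGm : ∀ g ∈ G, Measurable g) :
    Measurable (fun S : Fin m → Z => empRad m S G) := by
  obtain ⟨e, he⟩ := hGc.exists_eq_range hG
  have heG : ∀ n, e n ∈ G := fun n => he ▸ Set.mem_range_self n
  simp only [empRad_eq]
  apply Measurable.const_mul
  apply Finset.measurable_sum
  intro ε _
  have hrw : ∀ S : Fin m → Z, sSup (phi m ε S '' G) = ⨆ n, phi m ε S (e n) := by
    intro S
    rw [he, ← Set.range_comp]
    rfl
  simp only [hrw]
  apply Measurable.iSup
  intro n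
  apply Measurable.const_mul
  apply Finset.measurable_sum
  intro i _
  exact ((hGm (e n) (heG n)).comp (measurable_pi_apply i)).const_mul _

lemma empRad_abs_le {Z : Type*} (m : ℕ) (hm : 1 ≤ m) (G : Set (Z → ℝ)) (hG : G.Nonempty)
    (B : ℝ) (hGb : ∀ g ∈ G, ∀ z, |g z| ≤ B) (S : Fin m → Z) : |empRad m S G| ≤ B := by
  obtain ⟨gw, hgw⟩ := hG
  have hB0 : 0 ≤ B := le_trans (abs_nonneg _) (hGb gw hgw (S ⟨0, hm⟩))
  have habs : ∀ ε : Fin m → Bool, |sSup (phi m ε S '' G)| ≤ B := by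
    intro ε
    have hbdd : BddAbove (phi m ε S '' G) := by
      refine ⟨B, ?_⟩
      rintro x ⟨g, hg, rfl⟩
      exact (abs_le.1 (phi_abs_le m hm ε S g B (hGb g hg))).2
    rw [abs_le]
    constructor
    · calc -B ≤ phi m ε S gw := (abs_le.1 (phi_abs_le m hm ε S gw B (hGb gw hgw))).1
        _ ≤ _ := le_csSup hbdd ⟨gw, hgw, rfl⟩
    · refine csSup_le ⟨_, ⟨gw, hgw, rfl⟩⟩ ?_
      rintro x ⟨g, hg, rfl⟩
      exact (abs_le.1 (phi_abs_le m hm ε S g B (hGb g hg))).2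
  rw [empRad_eq, abs_mul, abs_of_pos (by positivity : (0:ℝ) < ((2:ℝ)^m)⁻¹)]
  calc ((2:ℝ)^m)⁻¹ * |∑ ε : Fin m → Bool, sSup (phi m ε S '' G)|
      ≤ ((2:ℝ)^m)⁻¹ * ∑ ε : Fin m → Bool, B := by
        gcongr
        exact (Finset.abs_sum_le_sum_abs _ _).trans (Finset.sum_le_sum fun ε _ => habs ε)
    _ = B := by
        simp only [Finset.sum_const, Finset.card_univ, Fintype.card_fun, Fintype.card_bool,
          Fintype.card_fin, nsmul_eq_mul, Nat.cast_pow, Nat.cast_ofNat]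
        rw [← mul_assoc, inv_mul_cancel₀ (by positivity), one_mul]

lemma empRad_integrable {Z : Type*} [MeasurableSpace Z] (D : Measure Z)
    [IsProbabilityMeasure D] (m : ℕ) (hm : 1 ≤ m) (G : Set (Z → ℝ)) (hG : G.Nonempty)
    (hGc : G.Countable) (hGm : ∀ g ∈ G, Measurable g) (B : ℝ)
    (hGb : ∀ g ∈ G, ∀ z, |g z| ≤ B) :
    Integrable (fun S : Fin m → Z => empRad m S G)
      (Measure.pi fun _ : Fin m => D) := by
  refine Integrable.mono' (integrable_const B)
    (empRad_measurable m G hG hGc hGm).aestronglyMeasurable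
    (Filter.Eventually.of_forall fun S => ?_)
  rw [Real.norm_eq_abs]
  exact empRad_abs_le m hm G hG B hGb S
theorem stmt1 {Z : Type*} [MeasurableSpace Z] (D : Measure Z) [IsProbabilityMeasure D]
    (m : ℕ) (hm : 1 ≤ m) (G : Set (Z → ℝ)) (hG : G.Nonempty) (hGc : G.Countable)
    (hGm : ∀ g ∈ G, Measurable g) (C : ℝ) (hGb : ∀ g ∈ G, ∀ z, |g z| ≤ C)
    (lam : ℝ) (hlam : 0 ≤ lam) (g₀ g₁ g₂ : Z → ℝ)
    (hg₁ : g₁ ∈ convexHull ℝ G) (hg₂ : g₂ ∈ convexHull ℝ G)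
    (hg₀ : ∀ z, g₀ z = (1 + lam) * g₁ z - lam * g₂ z) :
    expRad m D G ≤ expRad m D (G ∪ {g₀}) ∧
      expRad m D (G ∪ {g₀}) ≤ (1 + lam) * expRad m D G := by
  obtain ⟨gw, hgw⟩ := hG
  have hG : G.Nonempty := ⟨gw, hgw⟩
  have hZ : Nonempty Z := MeasureTheory.Measure.nonempty_of_neZero D
  obtain ⟨z₀⟩ := hZ
  have hC0 : 0 ≤ C := le_trans (abs_nonneg _) (hGb gw hgw z₀)
  set C₀ : ℝ := (1 + 2 * lam) * C with hC₀def
  have hCC₀ : C ≤ C₀ := by nlinarith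
  have hg₀b : ∀ z, |g₀ z| ≤ C₀ := by
    intro z
    have h1 := convexHull_abs_le hGb hg₁ z
    have h2 := convexHull_abs_le hGb hg₂ z
    rw [hg₀ z]
    calc |(1 + lam) * g₁ z - lam * g₂ z| ≤ |(1+lam) * g₁ z| + |lam * g₂ z| := abs_sub _ _
      _ = (1+lam) * |g₁ z| + lam * |g₂ z| := by
          rw [abs_mul, abs_mul, abs_of_nonneg (by linarith : (0:ℝ) ≤ 1+lam),
            abs_of_nonneg hlam]
      _ ≤ (1+lam) * C + lam * C := by gcongr <;> linarith
      _ = C₀ := by rw [hC₀def]; ring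
  have hGb' : ∀ g ∈ G ∪ {g₀}, ∀ z, |g z| ≤ C₀ := by
    rintro g (hg | rfl) z
    · exact (hGb g hg z).trans hCC₀
    · exact hg₀b z
  have hG' : (G ∪ {g₀}).Nonempty := ⟨gw, Or.inl hgw⟩
  have hGc' : (G ∪ {g₀}).Countable := hGc.union (Set.countable_singleton _)
  have hg₀m : Measurable g₀ := by
    have h1 := convexHull_measurable hGm hg₁
    have h2 := convexHull_measurable hGm hg₂
    have : g₀ = fun z => (1 + lam) * g₁ z - lam * g₂ z := funext hg₀
    rw [this]
    exact ((h1.const_mul _).sub (h2.const_mul _))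
  have hGm' : ∀ g ∈ G ∪ {g₀}, Measurable g := by
    rintro g (hg | rfl)
    · exact hGm g hg
    · exact hg₀m
  have int1 : Integrable (fun S : Fin m → Z => empRad m S G)
      (Measure.pi fun _ : Fin m => D) := empRad_integrable D m hm G hG hGc hGm C hGb
  have int2 : Integrable (fun S : Fin m → Z => empRad m S (G ∪ {g₀}))
      (Measure.pi fun _ : Fin m => D) :=
    empRad_integrable D m hm (G ∪ {g₀}) hG' hGc' hGm' C₀ hGb'
  have hpt := fun S : Fin m → Z =>
    emp_ineq m hm G hG C hGb lam hlam g₀ g₁ g₂ hg₁ hg₂ hg₀ S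
  constructor
  · exact integral_mono int1 int2 fun S => (hpt S).1
  · calc expRad m D (G ∪ {g₀})
        ≤ ∫ S, (1 + lam) * empRad m S G ∂(Measure.pi fun _ : Fin m => D) :=
          integral_mono int2 (int1.const_mul _) fun S => (hpt S).2
      _ = (1 + lam) * expRad m D G := integral_const_mul _ _
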